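/- In the general setup (arbitrary u with u(0)=0, u(1)=1), for every natural number h there exists a polynomial p with rational coefficients of degree at most h+1 such that p(j) = L_h(j) for every natural number j. -/

import Mathlib

/-- Formal exponential of a power series with zero constant coefficient over a
`ℚ`-algebra: `exp F = Σ_{k≥0} F^k / k!`.  Since `F` has zero constant coefficient,
only `k ≤ j` contributes to the coefficient of `x^j`, so this sum is exact. -/
noncomputable def expPS {A : Type*} [CommRing A] [Algebra ℚ A]
    (F : PowerSeries A) : PowerSeries A :=
  PowerSeries.mk fun j =>
    ∑ k ∈ Finset.range (j + 1), (k.factorial : ℚ)⁻¹ • PowerSeries.coeff (R := A) j (F ^ k)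

/-- `Mj u j` is the coefficient of `x^j` in `exp (n · U(x))`, a polynomial in `n`,
where `U(x) = Σ_{s≥1} u s · x^s` (here `n` is the polynomial variable `X`). -/
noncomputable def Mj (u : ℕ → ℚ) (j : ℕ) : Polynomial ℚ :=
  PowerSeries.coeff (R := Polynomial ℚ) j
    (expPS (PowerSeries.mk fun s => Polynomial.C (u s) * Polynomial.X))

/-- `atilde u h j = j! · (coefficient of n^{j−h} in M_j)` for `h ≤ j`, and `0` for `h > j`. -/
noncomputable def atilde (u : ℕ → ℚ) (h j : ℕ) : ℚ :=
  if h ≤ j then (j.factorial : ℚ) * (Mj u j).coeff (j - h) else 0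

/-- The coefficient of `t^h` in `log (1 + V)` for a power series `V` with zero constant
coefficient: `[t^h] Σ_{m≥1} (−1)^{m+1} V^m / m` (only `m ≤ h` contributes). -/
noncomputable def logCoeffOneAdd (V : PowerSeries ℚ) (h : ℕ) : ℚ :=
  ∑ m ∈ Finset.Icc 1 h, ((-1 : ℚ) ^ (m + 1) / m) * PowerSeries.coeff (R := ℚ) h (V ^ m)

/-- `Lh u h j` is the coefficient of `t^h` in `log (1 + Σ_{s≥1} ã_s(j) t^s)`. -/
noncomputable def Lh (u : ℕ → ℚ) (h j : ℕ) : ℚ :=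
  logCoeffOneAdd (PowerSeries.mk fun s => if s = 0 then 0 else atilde u s j) h


set_option linter.unusedSectionVars false
set_option maxHeartbeats 1000000

open PowerSeries Finset

section General
variable {A : Type*} [CommRing A] [Algebra ℚ A]

lemma coeff_pow_eq_zero {F : PowerSeries A} (hF : constantCoeff (R := A) F = 0)
    {j k : ℕ} (hjk : j < k) : PowerSeries.coeff (R := A) j (F ^ k) = 0 := by
  have hdvd : (PowerSeries.X : PowerSeries A) ^ k ∣ F ^ k :=
    pow_dvd_pow_of_dvd (PowerSeries.X_dvd_iff.mpr hF) k
  exact (PowerSeries.X_pow_dvd_iff.mp hdvd) j hjk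

lemma coeff_pow_mul_eq_zero {F W : PowerSeries A} (hF : constantCoeff (R := A) F = 0)
    {j k : ℕ} (hjk : j < k) : PowerSeries.coeff (R := A) j (F ^ k * W) = 0 := by
  have hdvd : (PowerSeries.X : PowerSeries A) ^ k ∣ F ^ k * W :=
    Dvd.dvd.mul_right (pow_dvd_pow_of_dvd (PowerSeries.X_dvd_iff.mpr hF) k) W
  exact (PowerSeries.X_pow_dvd_iff.mp hdvd) j hjk

lemma derivative_expPS {F : PowerSeries A} (hF : constantCoeff (R := A) F = 0) :
    d⁄dX A (expPS F) = d⁄dX A F * expPS F := by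
  ext j
  rw [PowerSeries.coeff_derivative]
  have hL : PowerSeries.coeff (R := A) (j+1) (expPS F) * ((j:A)+1)
      = ∑ k ∈ Finset.range (j + 1),
          (k.factorial : ℚ)⁻¹ • PowerSeries.coeff (R := A) j (F ^ k * d⁄dX A F) := by
    rw [expPS, PowerSeries.coeff_mk, Finset.sum_mul]
    rw [Finset.sum_range_succ' (fun k => (k.factorial : ℚ)⁻¹ • PowerSeries.coeff (R := A) (j+1) (F ^ k) * ((j:A)+1))]
    have h0 : ((Nat.factorial 0 : ℚ))⁻¹ • PowerSeries.coeff (R := A) (j+1) (F ^ 0) * ((j:A)+1) = 0 := by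
      simp [PowerSeries.coeff_one]
    rw [h0, add_zero]
    apply Finset.sum_congr rfl
    intro k _
    have hD : PowerSeries.coeff (R := A) (j+1) (F ^ (k+1)) * ((j:A)+1)
        = PowerSeries.coeff (R := A) j (d⁄dX A (F ^ (k+1))) := by
      rw [PowerSeries.coeff_derivative]
    rw [smul_mul_assoc, hD, Derivation.leibniz_pow]
    rw [Nat.add_sub_cancel]
    rw [map_nsmul, ← Nat.cast_smul_eq_nsmul ℚ, smul_smul]
    have : ((k+1).factorial : ℚ)⁻¹ * ((k+1 : ℕ) : ℚ) = ((k.factorial : ℚ))⁻¹ := by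
      rw [Nat.factorial_succ]
      push_cast
      rw [mul_comm ((k:ℚ)+1)]
      rw [mul_inv]
      field_simp
    rw [this, smul_eq_mul]
  rw [hL, mul_comm (d⁄dX A F), PowerSeries.coeff_mul]
  have hR : ∀ p : ℕ × ℕ, p ∈ Finset.HasAntidiagonal.antidiagonal j →
      PowerSeries.coeff (R := A) p.1 (expPS F) * PowerSeries.coeff (R := A) p.2 (d⁄dX A F)
      = ∑ k ∈ Finset.range (j+1), (k.factorial : ℚ)⁻¹ •
          (PowerSeries.coeff (R := A) p.1 (F ^ k) * PowerSeries.coeff (R := A) p.2 (d⁄dX A F)) := by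
    rintro ⟨a, b⟩ hab
    have ha : a ≤ j := by
      have := Finset.HasAntidiagonal.mem_antidiagonal.mp hab; omega
    rw [expPS, PowerSeries.coeff_mk, Finset.sum_mul]
    rw [← Finset.sum_subset (Finset.range_subset_range.mpr (by omega : a + 1 ≤ j + 1))]
    · apply Finset.sum_congr rfl
      intro k _
      rw [smul_mul_assoc]
    · intro k _ hk
      have hak : a < k := by simp at hk; omega
      rw [coeff_pow_eq_zero hF hak, zero_mul, smul_zero]
  rw [Finset.sum_congr rfl hR, Finset.sum_comm]
  apply Finset.sum_congr rfl
  intro k _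
  rw [← Finset.smul_sum]
  congr 1
  rw [PowerSeries.coeff_mul]

end General

section MjFacts
open PowerSeries
variable (u : ℕ → ℚ)

local notation "Fu" => (PowerSeries.mk fun s => Polynomial.C (u s) * Polynomial.X : PowerSeries (Polynomial ℚ))

lemma Mj_eq (b : ℕ) : Mj u b = PowerSeries.coeff (R := (Polynomial ℚ)) b (expPS (Fu)) := rfl

lemma coeff_mul_CX (p : Polynomial ℚ) (c : ℚ) (n : ℕ) :
    (p * (Polynomial.C c * Polynomial.X)).coeff (n+1) = p.coeff n * c := by
  rw [← mul_assoc, Polynomial.coeff_mul_X, Polynomial.coeff_mul_C]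

lemma natDegree_coeff_pow (k j : ℕ) :
    (PowerSeries.coeff (R := (Polynomial ℚ)) j ((Fu) ^ k)).natDegree ≤ k := by
  induction k generalizing j with
  | zero =>
    simp only [pow_zero, PowerSeries.coeff_one]
    split <;> simp
  | succ k ih =>
    rw [pow_succ, PowerSeries.coeff_mul]
    apply Polynomial.natDegree_sum_le_of_forall_le
    intro p _
    apply le_trans (Polynomial.natDegree_mul_le)
    have h1 : (PowerSeries.coeff (R := (Polynomial ℚ)) p.2 (Fu)).natDegree ≤ 1 := by
      rw [PowerSeries.coeff_mk]
      exact le_trans (Polynomial.natDegree_C_mul_le _ _) Polynomial.natDegree_X_le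
    have := ih p.1
    omega

lemma Mj_natDegree (j : ℕ) : (Mj u j).natDegree ≤ j := by
  rw [Mj_eq, expPS, PowerSeries.coeff_mk]
  apply Polynomial.natDegree_sum_le_of_forall_le
  intro k hk
  refine le_trans (Polynomial.natDegree_smul_le _ _) (le_trans (natDegree_coeff_pow u k j) ?_)
  simpa using Nat.lt_succ_iff.mp (Finset.mem_range.mp hk)

variable (hu0 : u 0 = 0) (hu1 : u 1 = 1)
include hu0

lemma constCoeff_Fu : PowerSeries.constantCoeff (R := (Polynomial ℚ)) (Fu) = 0 := by
  have : PowerSeries.constantCoeff (R := (Polynomial ℚ)) (Fu)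
      = Polynomial.C (u 0) * Polynomial.X := rfl
  rw [this, hu0]; simp

include hu1 in
lemma coeff_pow_self (j : ℕ) :
    (PowerSeries.coeff (R := (Polynomial ℚ)) j ((Fu) ^ j)).coeff j = 1 := by
  induction j with
  | zero => simp
  | succ j ih =>
    rw [pow_succ, PowerSeries.coeff_mul, Polynomial.finset_sum_coeff]
    rw [Finset.sum_eq_single_of_mem ((j, 1) : ℕ × ℕ)
        (Finset.HasAntidiagonal.mem_antidiagonal.mpr rfl)]
    · rw [PowerSeries.coeff_mk, coeff_mul_CX, ih, hu1, one_mul]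
    · rintro ⟨a, b⟩ hab hne
      have hab' : a + b = j + 1 := Finset.HasAntidiagonal.mem_antidiagonal.mp hab
      rw [PowerSeries.coeff_mk, coeff_mul_CX]
      rcases lt_trichotomy a j with hlt | rfl | hgt
      · rw [coeff_pow_eq_zero (constCoeff_Fu u hu0) hlt]
        simp
      · exact absurd (by omega : b = 1) (fun hb => hne (by simp [hb]))
      · have hb : b = 0 := by omega
        rw [hb, hu0, mul_zero]

include hu1 in
lemma Mj_coeff_self (j : ℕ) : (Mj u j).coeff j = (j.factorial : ℚ)⁻¹ := by
  rw [Mj_eq, expPS, PowerSeries.coeff_mk, Polynomial.finset_sum_coeff]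
  rw [Finset.sum_eq_single_of_mem j (Finset.self_mem_range_succ j)]
  · rw [Polynomial.coeff_smul, coeff_pow_self u hu0 hu1, smul_eq_mul, mul_one]
  · intro k hk hne
    have hk' : k < j := by
      have := Finset.mem_range.mp hk; omega
    rw [Polynomial.coeff_smul, Polynomial.coeff_eq_zero_of_natDegree_lt
      (lt_of_le_of_lt (natDegree_coeff_pow u k j) hk'), smul_zero]

lemma Mj_coeff_zero (j : ℕ) (hj : 1 ≤ j) : (Mj u j).coeff 0 = 0 := by
  rw [Mj_eq, expPS, PowerSeries.coeff_mk, Polynomial.finset_sum_coeff]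
  apply Finset.sum_eq_zero
  intro k _
  rw [Polynomial.coeff_smul]
  cases k with
  | zero =>
    have : j ≠ 0 := by omega
    simp [PowerSeries.coeff_one, this]
  | succ k =>
    rw [pow_succ, PowerSeries.coeff_mul, Polynomial.finset_sum_coeff]
    rw [Finset.sum_eq_zero, smul_zero]
    intro p _
    rw [PowerSeries.coeff_mk, Polynomial.mul_coeff_zero]
    simp

lemma Mj_rec (j : ℕ) : Mj u (j+1) * (((j : Polynomial ℚ)) + 1)
    = ∑ a ∈ Finset.range (j+1),
        Polynomial.C (u (a+1)) * Polynomial.X * (((a : Polynomial ℚ)) + 1) * Mj u (j - a) := by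
  have h := derivative_expPS (constCoeff_Fu u hu0)
  have h2 := congrArg (PowerSeries.coeff (R := (Polynomial ℚ)) j) h
  rw [PowerSeries.coeff_derivative, PowerSeries.coeff_mul,
    Finset.Nat.sum_antidiagonal_eq_sum_range_succ_mk] at h2
  rw [← Mj_eq] at h2
  rw [h2]
  apply Finset.sum_congr rfl
  intro a _
  rw [PowerSeries.coeff_derivative, PowerSeries.coeff_mk, ← Mj_eq]

include hu1 in
lemma atilde_rec (h j : ℕ) : atilde u h (j+1)
    = ∑ a ∈ Finset.range (h+1),
        ((a:ℚ)+1) * u (a+1) * (j.descFactorial a) * atilde u (h-a) (j-a) := by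
  by_cases hhj : h ≤ j
  · -- main case
    have hco := congrArg (fun p => Polynomial.coeff p ((j-h)+1)) (Mj_rec u hu0 j)
    have hCj : ((j : Polynomial ℚ) + 1) = Polynomial.C ((j:ℚ)+1) := by rw [map_add, map_one, Polynomial.C_eq_natCast]
    rw [hCj, Polynomial.coeff_mul_C, Polynomial.finset_sum_coeff] at hco
    have hterm : ∀ a ∈ Finset.range (j+1),
        (Polynomial.C (u (a+1)) * Polynomial.X * (((a : Polynomial ℚ)) + 1) * Mj u (j - a)).coeff ((j-h)+1)
        = ((a:ℚ)+1) * u (a+1) * ((Mj u (j-a)).coeff (j-h)) := by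
      intro a _
      have hCa : ((a : Polynomial ℚ) + 1) = Polynomial.C ((a:ℚ)+1) := by rw [map_add, map_one, Polynomial.C_eq_natCast]
      have : Polynomial.C (u (a+1)) * Polynomial.X * Polynomial.C ((a:ℚ)+1) * Mj u (j - a)
          = Polynomial.C (((a:ℚ)+1) * u (a+1)) * (Polynomial.X * Mj u (j-a)) := by
        simp only [Polynomial.C_mul, Polynomial.C_add, Polynomial.C_1]
        ring
      rw [hCa, this, Polynomial.coeff_C_mul, Polynomial.coeff_X_mul]
    rw [Finset.sum_congr rfl hterm] at hco
    -- now hco : (Mj u (j+1)).coeff ((j-h)+1) * (j+1) = Σ_{a∈range (j+1)} (a+1) u(a+1) Mj(j-a).coeff (j-h)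
    have hL : atilde u h (j+1) = (j.factorial : ℚ) *
        ∑ a ∈ Finset.range (j+1), ((a:ℚ)+1) * u (a+1) * ((Mj u (j-a)).coeff (j-h)) := by
      rw [atilde, if_pos (by omega : h ≤ j + 1)]
      have e1 : j + 1 - h = (j - h) + 1 := by omega
      rw [e1, ← hco, Nat.factorial_succ]
      push_cast
      ring
    rw [hL, Finset.mul_sum]
    rw [← Finset.sum_subset (Finset.range_subset_range.mpr (by omega : h + 1 ≤ j + 1))]
    · apply Finset.sum_congr rfl
      intro a ha
      have ha' : a ≤ h := by have := Finset.mem_range.mp ha; omega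
      rw [atilde, if_pos (by omega : h - a ≤ j - a)]
      have e2 : j - a - (h - a) = j - h := by omega
      rw [e2]
      have e3 : (j.factorial : ℚ) = (j.descFactorial a : ℚ) * ((j-a).factorial : ℚ) := by
        rw [← Nat.cast_mul]
        congr 1
        rw [mul_comm, Nat.factorial_mul_descFactorial (by omega : a ≤ j)]
      rw [e3]
      ring
    · intro a ha hna
      have h1 : h < a ∧ a ≤ j := by
        have := Finset.mem_range.mp ha
        simp only [Finset.mem_range] at hna
        omega
      rw [Polynomial.coeff_eq_zero_of_natDegree_lt
        (lt_of_le_of_lt (Mj_natDegree u (j - a)) (by omega : j - a < j - h))]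
      ring
  · -- h > j
    have hR : ∀ a ∈ Finset.range (h+1),
        ((a:ℚ)+1) * u (a+1) * (j.descFactorial a) * atilde u (h-a) (j-a) = 0 := by
      intro a _
      by_cases haj : a ≤ j
      · rw [atilde, if_neg (by omega : ¬ (h - a ≤ j - a)), mul_zero]
      · rw [Nat.descFactorial_eq_zero_iff_lt.mpr (by omega), Nat.cast_zero, mul_zero, zero_mul]
    rw [Finset.sum_eq_zero hR]
    by_cases hj1 : h ≤ j + 1
    · have : h = j + 1 := by omega
      rw [atilde, if_pos hj1, this, Nat.sub_self, Mj_coeff_zero u hu0 (j+1) (by omega), mul_zero]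
    · rw [atilde, if_neg hj1]

include hu1 in
lemma atilde_zero' (j : ℕ) : atilde u 0 j = 1 := by
  rw [atilde, if_pos (Nat.zero_le j), Nat.sub_zero, Mj_coeff_self u hu0 hu1]
  rw [mul_inv_cancel₀]
  exact_mod_cast Nat.factorial_ne_zero j

end MjFacts

section FpsSection
open PowerSeries
variable (u : ℕ → ℚ)

noncomputable def Fps (j : ℕ) : PowerSeries ℚ := PowerSeries.mk fun s => atilde u s j

lemma coeff_Fps (s j : ℕ) : PowerSeries.coeff (R := ℚ) s (Fps u j) = atilde u s j :=
  PowerSeries.coeff_mk _ _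

variable (hu0 : u 0 = 0) (hu1 : u 1 = 1)
include hu0 hu1

lemma constCoeff_Fps (j : ℕ) : PowerSeries.constantCoeff (R := ℚ) (Fps u j) = 1 := by
  rw [← PowerSeries.coeff_zero_eq_constantCoeff_apply, coeff_Fps, atilde_zero' u hu0 hu1]

lemma Fps_zero_eq : Fps u 0 = 1 := by
  ext s
  rw [coeff_Fps, PowerSeries.coeff_one]
  cases s with
  | zero => rw [atilde_zero' u hu0 hu1, if_pos rfl]
  | succ s => rw [atilde, if_neg (by omega), if_neg (by omega)]

lemma Fps_rec (j : ℕ) : Fps u (j+1)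
    = ∑ a ∈ Finset.range (j+1), (((a:ℚ)+1) * u (a+1) * (j.descFactorial a))
        • (PowerSeries.X^a * Fps u (j-a)) := by
  ext h
  rw [coeff_Fps, map_sum, atilde_rec u hu0 hu1 h j]
  have hterm : ∀ a : ℕ, (PowerSeries.coeff (R := ℚ) h) ((((a:ℚ)+1) * u (a+1) * (j.descFactorial a))
        • (PowerSeries.X^a * Fps u (j-a)))
      = (((a:ℚ)+1) * u (a+1) * (j.descFactorial a)) *
          (if a ≤ h then atilde u (h-a) (j-a) else 0) := by
    intro a
    rw [PowerSeries.coeff_smul, smul_eq_mul, PowerSeries.coeff_X_pow_mul']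
    split
    · rw [coeff_Fps]
    · rfl
  rw [Finset.sum_congr rfl (fun a _ => hterm a)]
  -- both sides equal the sum over range (min h j + 1)
  have hsub1 : Finset.range (min h j + 1) ⊆ Finset.range (h+1) :=
    Finset.range_subset_range.mpr (by omega)
  have hsub2 : Finset.range (min h j + 1) ⊆ Finset.range (j+1) :=
    Finset.range_subset_range.mpr (by omega)
  rw [← Finset.sum_subset hsub1, ← Finset.sum_subset hsub2]
  · apply Finset.sum_congr rfl
    intro a ha
    have ha' : a ≤ h := by have := Finset.mem_range.mp ha; omega
    rw [if_pos ha']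
  · intro a ha hna
    have h1 : min h j < a ∧ a ≤ j := by
      have := Finset.mem_range.mp ha
      simp only [Finset.mem_range] at hna; omega
    have hah : ¬ a ≤ h := by omega
    rw [if_neg hah, mul_zero]
  · intro a ha hna
    have h1 : min h j < a ∧ a ≤ h := by
      have := Finset.mem_range.mp ha
      simp only [Finset.mem_range] at hna; omega
    have haj : j < a := by omega
    rw [Nat.descFactorial_eq_zero_iff_lt.mpr haj]
    push_cast
    ring

end FpsSection

section PolyFamSection
open PowerSeries

def PolyFam (N : ℕ) (g : ℕ → PowerSeries ℚ) : Prop :=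
  ∀ h : ℕ, h ≤ N → ∃ p : Polynomial ℚ, p.natDegree ≤ h ∧
    ∀ i : ℕ, p.eval (i:ℚ) = PowerSeries.coeff (R := ℚ) h (g i)

lemma polyFam_choice {N : ℕ} {g : ℕ → PowerSeries ℚ} (H : PolyFam N g) :
    ∃ P : ℕ → Polynomial ℚ, ∀ h, h ≤ N → (P h).natDegree ≤ h ∧
      ∀ i : ℕ, (P h).eval (i:ℚ) = PowerSeries.coeff (R := ℚ) h (g i) := by
  refine ⟨fun h => if hh : h ≤ N then (H h hh).choose else 0, fun h hh => ?_⟩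
  simp only [dif_pos hh]
  exact (H h hh).choose_spec

lemma polyFam_const {N : ℕ} (φ : PowerSeries ℚ) : PolyFam N (fun _ => φ) := by
  intro h _
  exact ⟨Polynomial.C (PowerSeries.coeff (R := ℚ) h φ), by simp, fun i => by simp⟩

lemma polyFam_mul {N : ℕ} {g g' : ℕ → PowerSeries ℚ} (H : PolyFam N g) (H' : PolyFam N g') :
    PolyFam N (fun i => g i * g' i) := by
  obtain ⟨P, hP⟩ := polyFam_choice H
  obtain ⟨Q, hQ⟩ := polyFam_choice H'
  intro h hh
  refine ⟨∑ x ∈ Finset.HasAntidiagonal.antidiagonal h, P x.1 * Q x.2, ?_, ?_⟩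
  · apply Polynomial.natDegree_sum_le_of_forall_le
    intro x hx
    have hx' : x.1 + x.2 = h := Finset.HasAntidiagonal.mem_antidiagonal.mp hx
    have h1 := (hP x.1 (by omega)).1
    have h2 := (hQ x.2 (by omega)).1
    exact le_trans (Polynomial.natDegree_mul_le) (by omega)
  · intro i
    rw [Polynomial.eval_finset_sum, PowerSeries.coeff_mul]
    apply Finset.sum_congr rfl
    intro x hx
    have hx' : x.1 + x.2 = h := Finset.HasAntidiagonal.mem_antidiagonal.mp hx
    rw [Polynomial.eval_mul, (hP x.1 (by omega)).2 i, (hQ x.2 (by omega)).2 i]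

lemma polyFam_add {N : ℕ} {g g' : ℕ → PowerSeries ℚ} (H : PolyFam N g) (H' : PolyFam N g') :
    PolyFam N (fun i => g i + g' i) := by
  intro h hh
  obtain ⟨p, hp1, hp2⟩ := H h hh
  obtain ⟨q, hq1, hq2⟩ := H' h hh
  exact ⟨p + q, le_trans (Polynomial.natDegree_add_le _ _) (by omega),
    fun i => by rw [Polynomial.eval_add, hp2, hq2, map_add]⟩

lemma polyFam_shift {N m : ℕ} {g : ℕ → PowerSeries ℚ} (H : PolyFam N g) :
    PolyFam N (fun i => g (i + m)) := by
  intro h hh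
  obtain ⟨p, hp1, hp2⟩ := H h hh
  refine ⟨p.comp (Polynomial.X + Polynomial.C (m:ℚ)), ?_, ?_⟩
  · rw [Polynomial.natDegree_comp]
    have : (Polynomial.X + Polynomial.C (m:ℚ)).natDegree = 1 := by
      rw [Polynomial.natDegree_X_add_C]
    rw [this, mul_one]
    exact hp1
  · intro i
    rw [Polynomial.eval_comp]
    simp only [Polynomial.eval_add, Polynomial.eval_X, Polynomial.eval_C]
    rw [show ((i:ℚ) + m) = ((i + m : ℕ) : ℚ) by push_cast; ring]
    exact hp2 (i + m)

lemma polyFam_inv {N : ℕ} {g : ℕ → PowerSeries ℚ} (Hc : ∀ i, PowerSeries.constantCoeff (R := ℚ) (g i) = 1)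
    (H : PolyFam N g) : PolyFam N (fun i => (g i)⁻¹) := by
  obtain ⟨P, hP⟩ := polyFam_choice H
  intro h
  induction h using Nat.strong_induction_on with
  | _ h IH =>
  intro hh
  -- Skolemize IH
  have IH' : ∃ Q : ℕ → Polynomial ℚ, ∀ m, m < h → (Q m).natDegree ≤ m ∧
      ∀ i : ℕ, (Q m).eval (i:ℚ) = PowerSeries.coeff (R := ℚ) m ((g i)⁻¹) := by
    refine ⟨fun m => if hm : m < h then (IH m hm (by omega)).choose else 0, fun m hm => ?_⟩
    simp only [dif_pos hm]
    exact (IH m hm (by omega)).choose_spec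
  obtain ⟨Q, hQ⟩ := IH'
  cases h with
  | zero =>
    refine ⟨1, by simp, fun i => ?_⟩
    show (1 : Polynomial ℚ).eval (i:ℚ) = PowerSeries.coeff (R := ℚ) 0 ((g i)⁻¹)
    rw [PowerSeries.coeff_zero_eq_constantCoeff_apply, PowerSeries.constantCoeff_inv, Hc i]
    simp
  | succ h =>
    have key : ∀ i : ℕ, PowerSeries.coeff (R := ℚ) (h+1) ((g i)⁻¹)
        = - ∑ x ∈ Finset.range (h+1),
            PowerSeries.coeff (R := ℚ) (x+1) (g i) * PowerSeries.coeff (R := ℚ) (h-x) ((g i)⁻¹) := by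
      intro i
      have hinv : g i * (g i)⁻¹ = 1 :=
        PowerSeries.mul_inv_cancel _ (by rw [Hc i]; norm_num)
      have h1 := congrArg (PowerSeries.coeff (R := ℚ) (h+1)) hinv
      rw [PowerSeries.coeff_mul, PowerSeries.coeff_one, if_neg (by omega),
        Finset.Nat.sum_antidiagonal_eq_sum_range_succ_mk] at h1
      rw [Finset.sum_range_succ'] at h1
      simp only [Nat.sub_zero] at h1
      rw [PowerSeries.coeff_zero_eq_constantCoeff_apply, Hc i, one_mul] at h1
      have h2 : ∀ x ∈ Finset.range (h+1),
          PowerSeries.coeff (R := ℚ) (x+1) (g i) * PowerSeries.coeff (R := ℚ) (h+1-(x+1)) ((g i)⁻¹)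
          = PowerSeries.coeff (R := ℚ) (x+1) (g i) * PowerSeries.coeff (R := ℚ) (h-x) ((g i)⁻¹) := by
        intro x _
        rw [Nat.succ_sub_succ]
      rw [Finset.sum_congr rfl h2] at h1
      linarith [h1]
    refine ⟨- ∑ x ∈ Finset.range (h+1), P (x+1) * Q (h-x), ?_, ?_⟩
    · rw [Polynomial.natDegree_neg]
      apply Polynomial.natDegree_sum_le_of_forall_le
      intro x hx
      have hx' : x < h + 1 := Finset.mem_range.mp hx
      have d1 := (hP (x+1) (by omega)).1
      have d2 := (hQ (h-x) (by omega)).1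
      exact le_trans (Polynomial.natDegree_mul_le) (by omega)
    · intro i
      rw [key i, Polynomial.eval_neg, Polynomial.eval_finset_sum]
      congr 1
      apply Finset.sum_congr rfl
      intro x hx
      have hx' : x < h + 1 := Finset.mem_range.mp hx
      rw [Polynomial.eval_mul, (hP (x+1) (by omega)).2 i, (hQ (h-x) (by omega)).2 i]

lemma polyFam_smul {N : ℕ} (c : ℚ) {g : ℕ → PowerSeries ℚ} (H : PolyFam N g) :
    PolyFam N (fun i => c • g i) := by
  intro h hh
  obtain ⟨p, hp1, hp2⟩ := H h hh
  exact ⟨Polynomial.C c * p, le_trans (Polynomial.natDegree_mul_le) (by simp [hp1]),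
    fun i => by rw [Polynomial.eval_mul, Polynomial.eval_C, hp2, PowerSeries.coeff_smul, smul_eq_mul]⟩

end PolyFamSection

section RatSection
open PowerSeries
variable (u : ℕ → ℚ)

noncomputable def rat (j : ℕ) : PowerSeries ℚ := Fps u (j+1) * (Fps u j)⁻¹

noncomputable def Einv (k i : ℕ) : PowerSeries ℚ := Fps u i * (Fps u (i+k))⁻¹

variable (hu0 : u 0 = 0) (hu1 : u 1 = 1)
include hu0 hu1

lemma constCoeff_Fps_ne (j : ℕ) : PowerSeries.constantCoeff (R := ℚ) (Fps u j) ≠ 0 := by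
  rw [constCoeff_Fps u hu0 hu1]; norm_num

lemma constCoeff_rat (j : ℕ) : PowerSeries.constantCoeff (R := ℚ) (rat u j) = 1 := by
  rw [rat, map_mul, PowerSeries.constantCoeff_inv, constCoeff_Fps u hu0 hu1,
    constCoeff_Fps u hu0 hu1]
  norm_num

lemma Einv_zero (i : ℕ) : Einv u 0 i = 1 := by
  rw [Einv, Nat.add_zero]
  exact PowerSeries.mul_inv_cancel _ (constCoeff_Fps_ne u hu0 hu1 i)

lemma rat_inv (m : ℕ) : (rat u m)⁻¹ = Fps u m * (Fps u (m+1))⁻¹ := by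
  have h : rat u m * (Fps u m * (Fps u (m+1))⁻¹) = 1 := by
    rw [rat, show Fps u (m+1) * (Fps u m)⁻¹ * (Fps u m * (Fps u (m+1))⁻¹)
      = (Fps u (m+1) * (Fps u (m+1))⁻¹) * ((Fps u m)⁻¹ * Fps u m) from by ring,
      PowerSeries.mul_inv_cancel _ (constCoeff_Fps_ne u hu0 hu1 (m+1)),
      PowerSeries.inv_mul_cancel _ (constCoeff_Fps_ne u hu0 hu1 m), one_mul]
  calc (rat u m)⁻¹ = (rat u m)⁻¹ * (rat u m * (Fps u m * (Fps u (m+1))⁻¹)) := by rw [h, mul_one]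
  _ = ((rat u m)⁻¹ * rat u m) * (Fps u m * (Fps u (m+1))⁻¹) := by ring
  _ = Fps u m * (Fps u (m+1))⁻¹ := by
      rw [PowerSeries.inv_mul_cancel _ (by rw [constCoeff_rat u hu0 hu1]; norm_num), one_mul]

lemma Einv_succ (k i : ℕ) : Einv u (k+1) i = Einv u k i * (rat u (i+k))⁻¹ := by
  rw [Einv, Einv, rat_inv u hu0 hu1 (i+k),
    show Fps u i * (Fps u (i+k))⁻¹ * (Fps u (i+k) * (Fps u (i+k+1))⁻¹)
      = Fps u i * (Fps u (i+k+1))⁻¹ * ((Fps u (i+k))⁻¹ * Fps u (i+k)) from by ring,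
    PowerSeries.inv_mul_cancel _ (constCoeff_Fps_ne u hu0 hu1 (i+k)), mul_one]
  rw [show i + (k+1) = i + k + 1 from by omega]

lemma polyFam_Einv {N : ℕ} (H : PolyFam N (rat u)) (k : ℕ) : PolyFam N (Einv u k) := by
  induction k with
  | zero =>
    have : Einv u 0 = fun _ => (1 : PowerSeries ℚ) := funext (Einv_zero u hu0 hu1)
    rw [this]
    exact polyFam_const 1
  | succ k IH =>
    have : Einv u (k+1) = fun i => Einv u k i * (rat u (i+k))⁻¹ :=
      funext (Einv_succ u hu0 hu1 k)
    rw [this]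
    exact polyFam_mul IH (polyFam_inv
      (fun i => constCoeff_rat u hu0 hu1 (i+k)) (polyFam_shift H))

lemma polyFam_rat : ∀ N, PolyFam N (rat u) := by
  intro N
  induction N with
  | zero =>
    intro h hh
    have h0 : h = 0 := by omega
    subst h0
    refine ⟨1, by simp, fun j => ?_⟩
    show (1 : Polynomial ℚ).eval (j:ℚ) = PowerSeries.coeff (R := ℚ) 0 (rat u j)
    rw [PowerSeries.coeff_zero_eq_constantCoeff_apply, constCoeff_rat u hu0 hu1]
    simp
  | succ N IH =>
    intro h hh
    by_cases hN : h ≤ N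
    · exact IH h hN
    · have hh' : h = N + 1 := by omega
      subst hh'
      -- choice function for Einv polynomials
      have hA : ∀ a : ℕ, ∃ q : Polynomial ℚ, (1 ≤ a → a ≤ N+1 →
          (q.natDegree ≤ N+1-a ∧ ∀ i : ℕ, q.eval (i:ℚ)
            = PowerSeries.coeff (R := ℚ) (N+1-a) (Einv u a i))) := by
        intro a
        by_cases ha : 1 ≤ a ∧ a ≤ N+1
        · obtain ⟨q, hq1, hq2⟩ := polyFam_Einv u hu0 hu1 IH a (N+1-a) (by omega)
          exact ⟨q, fun _ _ => ⟨hq1, hq2⟩⟩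
        · exact ⟨0, fun h1 h2 => absurd ⟨h1, h2⟩ ha⟩
      choose A hA using hA
      -- the polynomial
      set p : Polynomial ℚ := ∑ a ∈ Finset.Icc 1 (N+1),
        Polynomial.C (((a:ℚ)+1) * u (a+1)) * descPochhammer ℚ a *
          ((A a).comp (Polynomial.X - Polynomial.C (a:ℚ))) with hp
      refine ⟨p, ?_, ?_⟩
      · apply Polynomial.natDegree_sum_le_of_forall_le
        intro a ha
        obtain ⟨ha1, ha2⟩ := Finset.mem_Icc.mp ha
        refine le_trans (Polynomial.natDegree_mul_le) ?_
        have d1 : (Polynomial.C (((a:ℚ)+1) * u (a+1)) * descPochhammer ℚ a).natDegree ≤ a := by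
          refine le_trans (Polynomial.natDegree_mul_le) ?_
          rw [Polynomial.natDegree_C, descPochhammer_natDegree, zero_add]
        have d2 : ((A a).comp (Polynomial.X - Polynomial.C (a:ℚ))).natDegree ≤ N+1-a := by
          rw [Polynomial.natDegree_comp]
          have : (Polynomial.X - Polynomial.C ((a:ℚ))).natDegree = 1 :=
            Polynomial.natDegree_X_sub_C _
          rw [this, mul_one]
          exact (hA a ha1 ha2).1
        omega
      · intro j
        -- key identity
        have key : PowerSeries.coeff (R := ℚ) (N+1) (rat u j)
            = ∑ a ∈ Finset.range (j+1), (((a:ℚ)+1) * u (a+1) * (j.descFactorial a)) *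
                (if a ≤ N+1 then PowerSeries.coeff (R := ℚ) (N+1-a) (Einv u a (j-a)) else 0) := by
          rw [rat, Fps_rec u hu0 hu1 j, Finset.sum_mul, map_sum]
          apply Finset.sum_congr rfl
          intro a ha
          have haj : a ≤ j := by have := Finset.mem_range.mp ha; omega
          have e : (((a:ℚ)+1) * u (a+1) * (j.descFactorial a))
                • (PowerSeries.X^a * Fps u (j-a)) * (Fps u j)⁻¹
              = (((a:ℚ)+1) * u (a+1) * (j.descFactorial a))
                • (PowerSeries.X^a * (Fps u (j-a) * (Fps u j)⁻¹)) := by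
            rw [smul_mul_assoc]
            congr 1
            rw [mul_assoc]
          rw [e, PowerSeries.coeff_smul, smul_eq_mul, PowerSeries.coeff_X_pow_mul']
          congr 1
          by_cases hc : a ≤ N + 1
          · rw [if_pos hc, if_pos hc, Einv, show j - a + a = j from by omega]
          · rw [if_neg hc, if_neg hc]
        rw [key]
        -- both sides equal sum over Icc 1 (min j (N+1))
        have hsub1 : Finset.Icc 1 (min j (N+1)) ⊆ Finset.range (j+1) := by
          intro x hx
          obtain ⟨h1, h2⟩ := Finset.mem_Icc.mp hx
          exact Finset.mem_range.mpr (by omega)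
        have hsub2 : Finset.Icc 1 (min j (N+1)) ⊆ Finset.Icc 1 (N+1) := by
          apply Finset.Icc_subset_Icc_right
          omega
        rw [hp, Polynomial.eval_finset_sum, ← Finset.sum_subset hsub1, ← Finset.sum_subset hsub2]
        · apply Finset.sum_congr rfl
          intro a ha
          obtain ⟨ha1, ha2⟩ := Finset.mem_Icc.mp ha
          have haj : a ≤ j := by omega
          have haN : a ≤ N+1 := by omega
          rw [if_pos haN]
          rw [Polynomial.eval_mul, Polynomial.eval_mul, Polynomial.eval_C,
            Polynomial.eval_comp]
          simp only [Polynomial.eval_sub, Polynomial.eval_X, Polynomial.eval_C]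
          rw [show (j:ℚ) - (a:ℚ) = ((j - a : ℕ) : ℚ) from by
            push_cast [Nat.cast_sub haj]; ring]
          rw [(hA a ha1 haN).2 (j-a)]
          rw [descPochhammer_eval_eq_descFactorial]
        · -- extra terms in Icc 1 (N+1) : a > j
          intro a ha hna
          obtain ⟨ha1, ha2⟩ := Finset.mem_Icc.mp ha
          have haj : j < a := by
            by_contra hc
            exact hna (Finset.mem_Icc.mpr ⟨ha1, by omega⟩)
          rw [Polynomial.eval_mul, Polynomial.eval_mul,
            descPochhammer_eval_eq_descFactorial,
            Nat.descFactorial_eq_zero_iff_lt.mpr haj]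
          norm_num
        · -- extra terms in range (j+1) : a = 0 or a > N+1
          intro a ha hna
          have haj : a ≤ j := by have := Finset.mem_range.mp ha; omega
          by_cases ha0 : a = 0
          · subst ha0
            rw [if_pos (by omega), Nat.sub_zero, Nat.sub_zero, Einv_zero u hu0 hu1,
              PowerSeries.coeff_one, if_neg (by omega)]
            norm_num
          · have haN : N+1 < a := by
              by_contra hc
              exact hna (Finset.mem_Icc.mpr ⟨by omega, by omega⟩)
            rw [if_neg (by omega), mul_zero]

end RatSection

section LogSection
open PowerSeries

noncomputable def logS (V : PowerSeries ℚ) : PowerSeries ℚ :=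
  PowerSeries.mk fun h => logCoeffOneAdd V h

lemma coeff_logS (V : PowerSeries ℚ) (h : ℕ) :
    PowerSeries.coeff (R := ℚ) h (logS V) = logCoeffOneAdd V h := PowerSeries.coeff_mk _ _

lemma constCoeff_logS (V : PowerSeries ℚ) : PowerSeries.constantCoeff (R := ℚ) (logS V) = 0 := by
  rw [← PowerSeries.coeff_zero_eq_constantCoeff_apply, coeff_logS, logCoeffOneAdd]
  simp

lemma logS_zero : logS 0 = 0 := by
  ext h
  rw [coeff_logS, logCoeffOneAdd, map_zero]
  apply Finset.sum_eq_zero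
  intro m hm
  have hm1 : m ≠ 0 := by have := (Finset.mem_Icc.mp hm).1; omega
  rw [zero_pow hm1, map_zero, mul_zero]

lemma coeff_deriv_pow (V : PowerSeries ℚ) (m a : ℕ) :
    PowerSeries.coeff (R := ℚ) (a+1) (V^(m+1)) * ((a:ℚ)+1)
    = ((m:ℚ)+1) * PowerSeries.coeff (R := ℚ) a (V^m * d⁄dX ℚ V) := by
  have h := PowerSeries.coeff_derivative (V^(m+1)) a
  rw [Derivation.leibniz_pow, Nat.add_sub_cancel, map_nsmul,
    ← Nat.cast_smul_eq_nsmul ℚ, smul_eq_mul, smul_eq_mul] at h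
  push_cast at h ⊢
  linarith [h]

lemma dlog_coeff (V : PowerSeries ℚ) (a : ℕ) :
    PowerSeries.coeff (R := ℚ) a (d⁄dX ℚ (logS V))
    = ∑ m ∈ Finset.range (a+1), (-1:ℚ)^m * PowerSeries.coeff (R := ℚ) a (V^m * d⁄dX ℚ V) := by
  rw [PowerSeries.coeff_derivative, coeff_logS, logCoeffOneAdd, Finset.sum_mul,
    show Finset.Icc 1 (a+1) = Finset.Ico 1 (a+2) from (Finset.Ico_add_one_right_eq_Icc 1 (a+1)),
    Finset.sum_Ico_eq_sum_range,
    show a + 2 - 1 = a + 1 from rfl]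
  apply Finset.sum_congr rfl
  intro m hm
  rw [Nat.add_comm 1 m]
  rw [mul_assoc, coeff_deriv_pow]
  have hm1 : ((m:ℚ)+1) ≠ 0 := by positivity
  push_cast
  rw [pow_succ, pow_succ]
  field_simp

lemma logS_deriv (V : PowerSeries ℚ) (hV : PowerSeries.constantCoeff (R := ℚ) V = 0) :
    d⁄dX ℚ (logS V) * (1 + V) = d⁄dX ℚ V := by
  ext n
  rw [mul_add, mul_one, map_add, dlog_coeff, PowerSeries.coeff_mul]
  have hterm : ∀ x ∈ Finset.HasAntidiagonal.antidiagonal n,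
      PowerSeries.coeff (R := ℚ) x.1 (d⁄dX ℚ (logS V)) * PowerSeries.coeff (R := ℚ) x.2 V
      = ∑ m ∈ Finset.range (n+1),
          (-1:ℚ)^m * (PowerSeries.coeff (R := ℚ) x.1 (V^m * d⁄dX ℚ V) * PowerSeries.coeff (R := ℚ) x.2 V) := by
    intro x hx
    have hx1 : x.1 ≤ n := by
      have := Finset.HasAntidiagonal.mem_antidiagonal.mp hx; omega
    rw [dlog_coeff, Finset.sum_mul]
    rw [← Finset.sum_subset (Finset.range_subset_range.mpr (by omega : x.1 + 1 ≤ n + 1))]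
    · apply Finset.sum_congr rfl
      intro m _
      ring
    · intro m _ hm
      have : x.1 < m := by simp at hm; omega
      rw [coeff_pow_mul_eq_zero hV this, zero_mul, mul_zero]
  rw [Finset.sum_congr rfl hterm, Finset.sum_comm]
  have hstep : ∀ m ∈ Finset.range (n+1),
      (∑ x ∈ Finset.HasAntidiagonal.antidiagonal n,
        (-1:ℚ)^m * (PowerSeries.coeff (R := ℚ) x.1 (V^m * d⁄dX ℚ V) * PowerSeries.coeff (R := ℚ) x.2 V))
      = - ((-1:ℚ)^(m+1) * PowerSeries.coeff (R := ℚ) n (V^(m+1) * d⁄dX ℚ V)) := by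
    intro m _
    rw [← Finset.mul_sum, ← PowerSeries.coeff_mul]
    have : V^m * d⁄dX ℚ V * V = V^(m+1) * d⁄dX ℚ V := by ring
    rw [this, pow_succ _ (m)]
    ring
  rw [Finset.sum_congr rfl hstep]
  rw [← Finset.sum_add_distrib]
  have htel : ∀ m, ((-1:ℚ)^m * PowerSeries.coeff (R := ℚ) n (V^m * d⁄dX ℚ V))
      + -((-1:ℚ)^(m+1) * PowerSeries.coeff (R := ℚ) n (V^(m+1) * d⁄dX ℚ V))
      = (fun k => (-1:ℚ)^k * PowerSeries.coeff (R := ℚ) n (V^k * d⁄dX ℚ V)) m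
        - (fun k => (-1:ℚ)^k * PowerSeries.coeff (R := ℚ) n (V^k * d⁄dX ℚ V)) (m+1) := by
    intro m
    simp only [sub_eq_add_neg]
  rw [Finset.sum_congr rfl (fun m _ => htel m), Finset.sum_range_sub']
  rw [coeff_pow_mul_eq_zero hV (by omega : n < n+1)]
  simp

lemma logS_mul {A B : PowerSeries ℚ} (hA : PowerSeries.constantCoeff (R := ℚ) A = 1)
    (hB : PowerSeries.constantCoeff (R := ℚ) B = 1) :
    logS (A * B - 1) = logS (A - 1) + logS (B - 1) := by
  have hA0 : PowerSeries.constantCoeff (R := ℚ) (A - 1) = 0 := by rw [map_sub, hA]; simp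
  have hB0 : PowerSeries.constantCoeff (R := ℚ) (B - 1) = 0 := by rw [map_sub, hB]; simp
  have hAB0 : PowerSeries.constantCoeff (R := ℚ) (A * B - 1) = 0 := by
    rw [map_sub, map_mul, hA, hB]; simp
  have hABne : A * B ≠ 0 := by
    intro hc
    have := congrArg (PowerSeries.constantCoeff (R := ℚ)) hc
    rw [map_mul, hA, hB, map_zero] at this
    norm_num at this
  apply PowerSeries.derivative.ext
  · have kA := logS_deriv (A - 1) hA0
    have kB := logS_deriv (B - 1) hB0
    have kAB := logS_deriv (A * B - 1) hAB0
    rw [show (1 : PowerSeries ℚ) + (A - 1) = A from by ring] at kA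
    rw [show (1 : PowerSeries ℚ) + (B - 1) = B from by ring] at kB
    rw [show (1 : PowerSeries ℚ) + (A * B - 1) = A * B from by ring] at kAB
    have dA : d⁄dX ℚ (A - 1) = d⁄dX ℚ A := by
      rw [map_sub, Derivation.map_one_eq_zero, sub_zero]
    have dB : d⁄dX ℚ (B - 1) = d⁄dX ℚ B := by
      rw [map_sub, Derivation.map_one_eq_zero, sub_zero]
    have dAB : d⁄dX ℚ (A * B - 1) = d⁄dX ℚ A * B + A * d⁄dX ℚ B := by
      rw [map_sub, Derivation.map_one_eq_zero, sub_zero, Derivation.leibniz, smul_eq_mul, smul_eq_mul]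
      ring
    rw [dA] at kA; rw [dB] at kB; rw [dAB] at kAB
    apply mul_right_cancel₀ hABne
    rw [kAB, map_add]
    rw [show (d⁄dX ℚ (logS (A-1)) + d⁄dX ℚ (logS (B-1))) * (A * B)
      = (d⁄dX ℚ (logS (A-1)) * A) * B + (d⁄dX ℚ (logS (B-1)) * B) * A from by ring]
    rw [kA, kB]
    ring
  · rw [constCoeff_logS, map_add, constCoeff_logS, constCoeff_logS]
    norm_num

end LogSection

section Final
open PowerSeries
variable (u : ℕ → ℚ) (hu0 : u 0 = 0) (hu1 : u 1 = 1)
include hu0 hu1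

lemma logS_Fps (j : ℕ) :
    logS (Fps u j - 1) = ∑ i ∈ Finset.range j, logS (rat u i - 1) := by
  induction j with
  | zero =>
    rw [Fps_zero_eq u hu0 hu1, Finset.range_zero, Finset.sum_empty, sub_self, logS_zero]
  | succ j IH =>
    have hFj : Fps u (j+1) = rat u j * Fps u j := by
      rw [rat, mul_assoc, PowerSeries.inv_mul_cancel _ (constCoeff_Fps_ne u hu0 hu1 j), mul_one]
    rw [hFj, logS_mul (constCoeff_rat u hu0 hu1 j) (constCoeff_Fps u hu0 hu1 j), IH,
      Finset.sum_range_succ]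
    ring

lemma Lh_eq_coeff_logS (h j : ℕ) :
    Lh u h j = PowerSeries.coeff (R := ℚ) h (logS (Fps u j - 1)) := by
  rw [coeff_logS, Lh]
  congr 1
  ext s
  rw [PowerSeries.coeff_mk, map_sub, coeff_Fps, PowerSeries.coeff_one]
  cases s with
  | zero => rw [if_pos rfl, atilde_zero' u hu0 hu1, if_pos rfl, sub_self]
  | succ s => rw [if_neg (by omega), if_neg (by omega), sub_zero]

end Final

section SumPoly

lemma exists_sum_poly (d : ℕ) (q : Polynomial ℚ) (hq : q.natDegree ≤ d) :
    ∃ Q : Polynomial ℚ, Q.natDegree ≤ d + 1 ∧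
      ∀ n : ℕ, Q.eval (n:ℚ) = ∑ i ∈ Finset.range n, q.eval (i:ℚ) := by
  set B : ℕ → Polynomial ℚ := fun p => ∑ i ∈ Finset.range (p+1),
    Polynomial.C (bernoulli i * ((p+1).choose i) / (p+1)) * Polynomial.X^(p+1-i) with hB
  have hBdeg : ∀ p, (B p).natDegree ≤ p + 1 := by
    intro p
    apply Polynomial.natDegree_sum_le_of_forall_le
    intro i _
    refine le_trans (Polynomial.natDegree_C_mul_le _ _) ?_
    rw [Polynomial.natDegree_X_pow]
    omega
  have hBeval : ∀ p (n : ℕ), (B p).eval (n:ℚ) = ∑ k ∈ Finset.range n, (k:ℚ)^p := by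
    intro p n
    rw [sum_range_pow, hB, Polynomial.eval_finset_sum]
    apply Finset.sum_congr rfl
    intro i _
    rw [Polynomial.eval_mul, Polynomial.eval_C, Polynomial.eval_pow, Polynomial.eval_X]
    ring
  refine ⟨∑ p ∈ Finset.range (d+1), Polynomial.C (q.coeff p) * B p, ?_, ?_⟩
  · apply Polynomial.natDegree_sum_le_of_forall_le
    intro p hp
    refine le_trans (Polynomial.natDegree_C_mul_le _ _) (le_trans (hBdeg p) ?_)
    have := Finset.mem_range.mp hp
    omega
  · intro n
    rw [Polynomial.eval_finset_sum]
    have : ∀ i ∈ Finset.range n, q.eval (i:ℚ)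
        = ∑ p ∈ Finset.range (d+1), q.coeff p * (i:ℚ)^p := by
      intro i _
      exact Polynomial.eval_eq_sum_range' (by omega : q.natDegree < d + 1) _
    rw [Finset.sum_congr rfl this, Finset.sum_comm]
    apply Finset.sum_congr rfl
    intro p _
    rw [Polynomial.eval_mul, Polynomial.eval_C, hBeval, Finset.mul_sum]

end SumPoly

/-- For arbitrary `u` with `u 0 = 0` and `u 1 = 1`, for every `h` there is a polynomial
of degree at most `h + 1` representing `j ↦ L_h(j)` on the naturals. -/
theorem exists_polynomial_Lh (u : ℕ → ℚ) (hu0 : u 0 = 0) (hu1 : u 1 = 1) (h : ℕ) :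
    ∃ p : Polynomial ℚ, p.degree ≤ (h + 1 : ℕ) ∧
      ∀ j : ℕ, p.eval (j : ℚ) = Lh u h j := by
  -- the family j ↦ rat u j - 1 is a PolyFam at level h
  have Hrat : PolyFam h (rat u) := polyFam_rat u hu0 hu1 h
  have Hsub : PolyFam h (fun i => rat u i - 1) := by
    have H1 := polyFam_add Hrat (polyFam_const (N := h) (-1))
    have : (fun i => rat u i + (-1)) = fun i => rat u i - 1 := by
      funext i; ring
    rwa [this] at H1
  have Hpow : ∀ m : ℕ, PolyFam h (fun i => (rat u i - 1)^m) := by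
    intro m
    induction m with
    | zero =>
      have : (fun i => (rat u i - 1)^0) = fun _ => (1 : PowerSeries ℚ) := by
        funext i; rw [pow_zero]
      rw [this]
      exact polyFam_const 1
    | succ m IH =>
      have : (fun i => (rat u i - 1)^(m+1)) = fun i => (rat u i - 1)^m * (rat u i - 1) := by
        funext i; rw [pow_succ]
      rw [this]
      exact polyFam_mul IH Hsub
  -- polynomial q for i ↦ coeff h (logS (rat u i - 1))
  have hq : ∀ m : ℕ, ∃ pm : Polynomial ℚ, pm.natDegree ≤ h ∧
      ∀ i : ℕ, pm.eval (i:ℚ) = PowerSeries.coeff (R := ℚ) h ((rat u i - 1)^m) :=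
    fun m => Hpow m h le_rfl
  choose P hP1 hP2 using hq
  set q : Polynomial ℚ := ∑ m ∈ Finset.Icc 1 h, Polynomial.C ((-1:ℚ)^(m+1)/m) * P m with hqdef
  have hqdeg : q.natDegree ≤ h := by
    apply Polynomial.natDegree_sum_le_of_forall_le
    intro m _
    exact le_trans (Polynomial.natDegree_C_mul_le _ _) (hP1 m)
  have hqeval : ∀ i : ℕ, q.eval (i:ℚ) = PowerSeries.coeff (R := ℚ) h (logS (rat u i - 1)) := by
    intro i
    rw [coeff_logS, logCoeffOneAdd, hqdef, Polynomial.eval_finset_sum]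
    apply Finset.sum_congr rfl
    intro m _
    rw [Polynomial.eval_mul, Polynomial.eval_C, hP2 m i]
  obtain ⟨Q, hQ1, hQ2⟩ := exists_sum_poly h q hqdeg
  refine ⟨Q, ?_, ?_⟩
  · rw [← Polynomial.natDegree_le_iff_degree_le]
    exact hQ1
  · intro j
    rw [hQ2 j, Lh_eq_coeff_logS u hu0 hu1 h j, logS_Fps u hu0 hu1 j, map_sum]
    apply Finset.sum_congr rfl
    intro i _
    exact hqeval i
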